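/- The relative mean squared error of the MMSE estimator β̂_M = (h-4)/T satisfies MSE(β̂_M)/β² = 2/(h-2), where T has gamma density with shape h/2 and rate β/2 and h > 4. -/

import Mathlib

open MeasureTheory Real Set

noncomputable def gammaDensity (h β t : ℝ) : ℝ :=
  (1 / Real.Gamma (h / 2)) * (β / 2) ^ (h / 2) * Real.exp (-β * t / 2) * t ^ (h / 2 - 1)

set_option maxHeartbeats 1000000 in
lemma integrableOn_rpow_mul_exp_neg_mul_Ioi' {a r : ℝ} (ha : 0 < a) (hr : 0 < r) :
    IntegrableOn (fun t : ℝ => t ^ (a - 1) * Real.exp (-(r * t))) (Ioi 0) := by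
  have hg : IntegrableOn (fun x : ℝ => Real.exp (-x) * x ^ (a - 1)) (Ioi 0) :=
    Real.GammaIntegral_convergent ha
  have hgi : Integrable ((Ioi (0 : ℝ)).indicator fun x => Real.exp (-x) * x ^ (a - 1)) :=
    (integrable_indicator_iff measurableSet_Ioi).2 hg
  have hcomp : Integrable fun x : ℝ =>
      ((Ioi (0 : ℝ)).indicator fun x => Real.exp (-x) * x ^ (a - 1)) (r * x) :=
    (integrable_comp_mul_left_iff _ hr.ne').2 hgi
  have heq : (fun x : ℝ =>
      ((Ioi (0 : ℝ)).indicator fun x => Real.exp (-x) * x ^ (a - 1)) (r * x)) =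
      (Ioi (0 : ℝ)).indicator fun x => Real.exp (-(r * x)) * (r * x) ^ (a - 1) := by
    funext x
    by_cases hx : x ∈ Ioi (0 : ℝ)
    · rw [Set.indicator_of_mem hx, Set.indicator_of_mem (by exact mul_pos hr hx)]
    · rw [Set.indicator_of_notMem hx, Set.indicator_of_notMem]
      intro hmem
      simp only [mem_Ioi, not_lt] at hx
      simp only [mem_Ioi] at hmem
      nlinarith
  rw [heq] at hcomp
  have h2 : IntegrableOn (fun x : ℝ => Real.exp (-(r * x)) * (r * x) ^ (a - 1)) (Ioi 0) :=
    (integrable_indicator_iff measurableSet_Ioi).1 hcomp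
  have h3 : IntegrableOn (fun x : ℝ => r ^ (a - 1) * (x ^ (a - 1) * Real.exp (-(r * x)))) (Ioi 0) := by
    apply h2.congr_fun _ measurableSet_Ioi
    intro x hx
    dsimp only
    rw [Real.mul_rpow hr.le (le_of_lt hx)]
    ring
  have h4 : IntegrableOn
      (fun x : ℝ => (r ^ (a - 1))⁻¹ * (r ^ (a - 1) * (x ^ (a - 1) * Real.exp (-(r * x)))))
      (Ioi 0) := h3.const_mul _
  apply h4.congr_fun _ measurableSet_Ioi
  intro x _
  have hrne : r ^ (a - 1) ≠ 0 := (Real.rpow_pos_of_pos hr _).ne'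
  field_simp

/-- The relative MSE of the MMSE estimator β̂_M = (h-4)/T:
E[((h-4)/T - β)²]/β² = 2/(h-2), for T gamma with shape h/2 and rate β/2, h > 4. -/
theorem rmse_mmse (h β : ℝ) (hh : 4 < h) (hβ : 0 < β) :
    (∫ t in Ioi (0 : ℝ), ((h - 4) / t - β) ^ 2 * gammaDensity h β t) / β ^ 2 =
      2 / (h - 2) := by
  set s : ℝ := h / 2 with hs
  set b : ℝ := β / 2 with hb
  have hb0 : 0 < b := by positivity
  have hs2 : 0 < s - 2 := by simp [hs]; linarith
  have hs1 : 0 < s - 1 := by linarith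
  have hs0 : 0 < s := by linarith
  set C : ℝ := (1 / Real.Gamma s) * b ^ s with hC
  -- the three pieces
  have hint2 := integrableOn_rpow_mul_exp_neg_mul_Ioi' hs2 hb0
  have hint1 := integrableOn_rpow_mul_exp_neg_mul_Ioi' hs1 hb0
  have hint0 := integrableOn_rpow_mul_exp_neg_mul_Ioi' hs0 hb0
  have hval2 := Real.integral_rpow_mul_exp_neg_mul_Ioi hs2 hb0
  have hval1 := Real.integral_rpow_mul_exp_neg_mul_Ioi hs1 hb0
  have hval0 := Real.integral_rpow_mul_exp_neg_mul_Ioi hs0 hb0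
  -- rewrite the integrand
  have key : ∫ t in Ioi (0 : ℝ), ((h - 4) / t - β) ^ 2 * gammaDensity h β t =
      ∫ t in Ioi (0 : ℝ),
        (C * (h - 4) ^ 2) * (t ^ (s - 2 - 1) * Real.exp (-(b * t)))
        + ((C * (-2 * β * (h - 4))) * (t ^ (s - 1 - 1) * Real.exp (-(b * t)))
        + (C * β ^ 2) * (t ^ (s - 1) * Real.exp (-(b * t)))) := by
    apply setIntegral_congr_fun measurableSet_Ioi
    intro t ht
    have ht0 : (0 : ℝ) < t := ht
    have htne : t ≠ 0 := ht0.ne'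
    have e1 : t ^ (s - 2 - 1) = t ^ (s - 1) / t ^ 2 := by
      rw [show s - 2 - 1 = (s - 1) - 2 by ring, Real.rpow_sub ht0, Real.rpow_two]
    have e2 : t ^ (s - 1 - 1) = t ^ (s - 1) / t := by
      rw [Real.rpow_sub_one htne]
    have eexp : Real.exp (-β * t / 2) = Real.exp (-(b * t)) := by
      congr 1; rw [hb]; ring
    simp only [gammaDensity, eexp, e1, e2, ← hs, ← hb, ← hC]
    field_simp
    ring
  rw [key]
  have hA : Integrable (fun t : ℝ => (C * (h - 4) ^ 2) * (t ^ (s - 2 - 1) * Real.exp (-(b * t))))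
      (volume.restrict (Ioi 0)) := hint2.const_mul _
  have hB : Integrable (fun t : ℝ => (C * (-2 * β * (h - 4))) * (t ^ (s - 1 - 1) * Real.exp (-(b * t))))
      (volume.restrict (Ioi 0)) := hint1.const_mul _
  have hD : Integrable (fun t : ℝ => (C * β ^ 2) * (t ^ (s - 1) * Real.exp (-(b * t))))
      (volume.restrict (Ioi 0)) := hint0.const_mul _
  have hBD : Integrable (fun t : ℝ => (C * (-2 * β * (h - 4))) * (t ^ (s - 1 - 1) * Real.exp (-(b * t)))
      + (C * β ^ 2) * (t ^ (s - 1) * Real.exp (-(b * t)))) (volume.restrict (Ioi 0)) := hB.add hD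
  rw [integral_add hA hBD, integral_add hB hD,
    integral_const_mul, integral_const_mul, integral_const_mul, hval2, hval1, hval0]
  -- power simplifications
  have hbne : b ≠ 0 := hb0.ne'
  have p2 : b ^ s * (1 / b) ^ (s - 2) = b ^ 2 := by
    rw [one_div, ← Real.rpow_neg_one b, ← Real.rpow_natCast b 2,
      ← Real.rpow_mul hb0.le, ← Real.rpow_add hb0]
    norm_num
  have p1 : b ^ s * (1 / b) ^ (s - 1) = b ^ 1 := by
    rw [one_div, ← Real.rpow_neg_one b, ← Real.rpow_natCast b 1,
      ← Real.rpow_mul hb0.le, ← Real.rpow_add hb0]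
    norm_num
  have p0 : b ^ s * (1 / b) ^ s = 1 := by
    rw [one_div, ← Real.rpow_neg_one b, ← Real.rpow_mul hb0.le, ← Real.rpow_add hb0]
    norm_num [Real.rpow_zero]
  -- Gamma recursions
  have hG2pos : 0 < Real.Gamma (s - 2) := Real.Gamma_pos_of_pos hs2
  have g1 : Real.Gamma (s - 1) = (s - 2) * Real.Gamma (s - 2) := by
    have := Real.Gamma_add_one hs2.ne'
    rwa [show s - 2 + 1 = s - 1 by ring] at this
  have g0 : Real.Gamma s = (s - 1) * Real.Gamma (s - 1) := by
    have := Real.Gamma_add_one hs1.ne'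
    rwa [show s - 1 + 1 = s by ring] at this
  have hGs : Real.Gamma s = (s - 1) * ((s - 2) * Real.Gamma (s - 2)) := by rw [g0, g1]
  have hGsne : Real.Gamma s ≠ 0 := by rw [hGs]; positivity
  rw [hC]
  have expand : (1 / Real.Gamma s * b ^ s * (h - 4) ^ 2 * ((1 / b) ^ (s - 2) * Real.Gamma (s - 2))
      + (1 / Real.Gamma s * b ^ s * (-2 * β * (h - 4)) * ((1 / b) ^ (s - 1) * Real.Gamma (s - 1))
      + 1 / Real.Gamma s * b ^ s * β ^ 2 * ((1 / b) ^ s * Real.Gamma s)))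
      = ((h - 4) ^ 2 * b ^ 2 * Real.Gamma (s - 2)
        + (-2 * β * (h - 4)) * b ^ 1 * Real.Gamma (s - 1)
        + β ^ 2 * Real.Gamma s) / Real.Gamma s := by
    linear_combination (1 / Real.Gamma s * (h - 4) ^ 2 * Real.Gamma (s - 2)) * p2
      + (1 / Real.Gamma s * (-2 * β * (h - 4)) * Real.Gamma (s - 1)) * p1
      + (1 / Real.Gamma s * β ^ 2 * Real.Gamma s) * p0
  rw [expand, g1, hGs]
  have hh2 : h - 2 ≠ 0 := by linarith
  have hs1' : s - 1 = (h - 2) / 2 := by rw [hs]; ring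
  have hs2' : s - 2 = (h - 4) / 2 := by rw [hs]; ring
  have hb' : b = β / 2 := hb
  rw [hs1', hs2', hb']
  have hh4 : h - 4 ≠ 0 := by linarith
  have hG2ne' : Real.Gamma ((h - 4) / 2) ≠ 0 := by rw [← hs2']; exact hG2pos.ne'
  have hβne : β ≠ 0 := hβ.ne'
  field_simp [hG2ne', hh2, hh4, hβne]
  ring
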